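/- Let r be a rational number with 0 < r < 1. Then the following are equivalent: (i) there exist coprime integers A, M with 0 < A < M and a bijection assigning the three numbers 1/2, 1/3, r to the three numbers 1/M, A/M, (M−A)/M such that each of 1/2, 1/3, r is strictly less than its assigned value; (ii) r < 1/5. -/

import Mathlib

theorem jn_criterion_multiplicity_five (r : ℚ) (hr0 : 0 < r) (hr1 : r < 1) :
    (∃ A M : ℤ, 0 < A ∧ A < M ∧ IsCoprime A M ∧
      ∃ σ : Equiv.Perm (Fin 3),
        ∀ i : Fin 3,
          (![(1 : ℚ) / 2, 1 / 3, r]) i <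
            (![(1 : ℚ) / M, (A : ℚ) / M, ((M : ℚ) - A) / M]) (σ i)) ↔ r < 1 / 5 := by
  constructor
  · rintro ⟨A, M, hA, hAM, -, σ, hσ⟩
    have hMZ : (0 : ℤ) < M := hA.trans hAM
    have hM : (0 : ℚ) < (M : ℚ) := by exact_mod_cast hMZ
    have h0 := hσ 0
    have h1 := hσ 1
    have h2 := hσ 2
    have key : ∀ j : Fin 3, j = 0 ∨ j = 1 ∨ j = 2 := by decide
    rcases key (σ 0) with e0 | e0 | e0 <;> rcases key (σ 1) with e1 | e1 | e1 <;>
      rcases key (σ 2) with e2 | e2 | e2 <;>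
      first
      | exact absurd (σ.injective (e0.trans e1.symm)) (by decide)
      | exact absurd (σ.injective (e0.trans e2.symm)) (by decide)
      | exact absurd (σ.injective (e1.trans e2.symm)) (by decide)
      | (rw [e0] at h0; rw [e1] at h1; rw [e2] at h2;
         simp only [Matrix.cons_val_zero, Matrix.cons_val_one, Matrix.head_cons,
           Matrix.cons_val_two, Matrix.tail_cons] at h0 h1 h2;
         rw [lt_div_iff₀ hM] at h0 h1 h2;
         first
         | (exfalso;
            have i : (M : ℚ) < 2 := by linarith
            have j : M < 2 := by exact_mod_cast i
            omega)
         | (exfalso;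
            have i0 : (M : ℚ) < 2 * A := by linarith
            have i1 : (M : ℚ) < 3 := by linarith
            have j0 : M < 2 * A := by exact_mod_cast i0
            have j1 : M < 3 := by exact_mod_cast i1
            omega)
         | (exfalso;
            have i0 : (M : ℚ) < 2 * ((M : ℚ) - A) := by linarith
            have i1 : (M : ℚ) < 3 := by exact_mod_cast (by linarith : (M:ℚ) < 3)
            have j0 : M < 2 * (M - A) := by exact_mod_cast i0
            have j1 : M < 3 := by exact_mod_cast i1
            omega)
         | (have i0 : (M : ℚ) < 2 * A := by linarith
            have i1 : (M : ℚ) < 3 * ((M : ℚ) - A) := by linarith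
            have j0 : M < 2 * A := by exact_mod_cast i0
            have j1 : M < 3 * (M - A) := by exact_mod_cast i1
            have j5 : 5 ≤ M := by omega
            have q5 : (5 : ℚ) ≤ M := by exact_mod_cast j5
            nlinarith [mul_nonneg hr0.le (by linarith : (0:ℚ) ≤ (M : ℚ) - 5)])
         | (have i0 : (M : ℚ) < 2 * ((M : ℚ) - A) := by linarith
            have i1 : (M : ℚ) < 3 * A := by linarith
            have j0 : M < 2 * (M - A) := by exact_mod_cast i0
            have j1 : M < 3 * A := by exact_mod_cast i1
            have j5 : 5 ≤ M := by omega
            have q5 : (5 : ℚ) ≤ M := by exact_mod_cast j5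
            nlinarith [mul_nonneg hr0.le (by linarith : (0:ℚ) ≤ (M : ℚ) - 5)]))
  · intro h5
    refine ⟨2, 5, by norm_num, by norm_num, ⟨-2, 1, by ring⟩, Equiv.swap 0 2, ?_⟩
    intro i
    fin_cases i
    · simp only [Equiv.swap_apply_left, Matrix.cons_val_zero, Matrix.cons_val_two,
        Matrix.tail_cons, Matrix.head_cons]
      norm_num
      exact (by norm_num : (1:ℚ)/2 < 3/5)
    · rw [Equiv.swap_apply_of_ne_of_ne (by decide) (by decide)]
      simp only [Matrix.cons_val_one, Matrix.head_cons]
      norm_num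
    · simp only [Equiv.swap_apply_right, Matrix.cons_val_zero, Matrix.cons_val_two,
        Matrix.tail_cons, Matrix.head_cons]
      norm_num
      exact h5
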